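/- arXiv:1003.5078 — 4 statements merged into one kernel-verified Lean document; each statement's English description precedes it below -/
import Mathlib

section
/- Let K be a field, I a finite set, and for each i ∈ I let Γ_i be a finite group with group algebra E_i = K[Γ_i]. For each pair (i,j) ∈ I × I let A_{ij} be a finite-dimensional K-vector space equipped with a left E_i-module structure and a right E_j-module structure whose actions commute, and assume each A_{ij} is free of finite rank as a left E_i-module and free of finite rank as a right E_j-module (a 'locally free group species'). Define the integer matrix B = (b_{ij}) by b_{ij} = (rank of A_{ji} as a left E_j-module) − (rank of A_{ij} as a right E_j-module). Then for all i, j ∈ I one has |Γ_j| · b_{ij} = − |Γ_i| · b_{ji}; in particular B is skew-symmetrizable with symmetrizer given by the group orders (|Γ_i|)_{i ∈ I}. -/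
open Module

/-- The exchange matrix of a locally free group species is skew-symmetrizable, with
symmetrizer given by the orders of the groups at the vertices. -/
theorem exchangeMatrix_skew_symmetrizable
    (K : Type*) [Field K] (I : Type*) [Fintype I]
    (Γ : I → Type*) [∀ i, Group (Γ i)] [∀ i, Fintype (Γ i)]
    -- the bimodules of arrows: finite-dimensional `K`-vector spaces
    (A : I → I → Type*) [∀ i j, AddCommGroup (A i j)] [∀ i j, Module K (A i j)]
    [∀ i j, FiniteDimensional K (A i j)]
    -- left `K[Γ i]`-module structure and right `K[Γ j]`-module structure
    [∀ i j, Module (MonoidAlgebra K (Γ i)) (A i j)]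
    [∀ i j, Module (MonoidAlgebra K (Γ j))ᵐᵒᵖ (A i j)]
    [∀ i j, IsScalarTower K (MonoidAlgebra K (Γ i)) (A i j)]
    [∀ i j, IsScalarTower K (MonoidAlgebra K (Γ j))ᵐᵒᵖ (A i j)]
    -- the two actions commute
    [∀ i j, SMulCommClass (MonoidAlgebra K (Γ i)) (MonoidAlgebra K (Γ j))ᵐᵒᵖ (A i j)]
    -- local freeness: each `A i j` is free of finite rank on both sides
    [∀ i j, Module.Free (MonoidAlgebra K (Γ i)) (A i j)]
    [∀ i j, Module.Finite (MonoidAlgebra K (Γ i)) (A i j)]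
    [∀ i j, Module.Free (MonoidAlgebra K (Γ j))ᵐᵒᵖ (A i j)]
    [∀ i j, Module.Finite (MonoidAlgebra K (Γ j))ᵐᵒᵖ (A i j)]
    -- the exchange matrix
    (B : I → I → ℤ)
    (hB : ∀ i j, B i j = (finrank (MonoidAlgebra K (Γ j)) (A j i) : ℤ)
        - (finrank (MonoidAlgebra K (Γ j))ᵐᵒᵖ (A i j) : ℤ)) :
    ∀ i j, (Fintype.card (Γ j) : ℤ) * B i j = -((Fintype.card (Γ i) : ℤ) * B j i) := by
  haveI fd : ∀ i, FiniteDimensional K (MonoidAlgebra K (Γ i)) := fun i =>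
    LinearEquiv.finiteDimensional (MonoidAlgebra.coeffLinearEquiv K (S := K) (M := Γ i)).symm
  haveI fdop : ∀ i, FiniteDimensional K (MonoidAlgebra K (Γ i))ᵐᵒᵖ := fun i =>
    FiniteDimensional.of_injective
      ((MulOpposite.opLinearEquiv K (M := MonoidAlgebra K (Γ i))).symm.toLinearMap)
      (LinearEquiv.injective _)
  haveI noe : ∀ i, IsNoetherianRing (MonoidAlgebra K (Γ i)) := fun i =>
    isNoetherian_of_tower K inferInstance
  haveI noeop : ∀ i, IsNoetherianRing (MonoidAlgebra K (Γ i))ᵐᵒᵖ := fun i =>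
    isNoetherian_of_tower K inferInstance
  have cardE : ∀ i, finrank K (MonoidAlgebra K (Γ i)) = Fintype.card (Γ i) := fun i =>
    (MonoidAlgebra.coeffLinearEquiv K (S := K) (M := Γ i)).finrank_eq.trans (finrank_finsupp_self K (ι := Γ i))
  have cardEop : ∀ i, finrank K (MonoidAlgebra K (Γ i))ᵐᵒᵖ = Fintype.card (Γ i) := fun i => by
    rw [(MulOpposite.opLinearEquiv K (M := MonoidAlgebra K (Γ i))).symm.finrank_eq, cardE]
  intro i j
  have h1 : Fintype.card (Γ j) * finrank (MonoidAlgebra K (Γ j)) (A j i)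
      = finrank K (A j i) := by
    rw [← cardE j]; exact Module.finrank_mul_finrank K (MonoidAlgebra K (Γ j)) (A j i)
  have h2 : Fintype.card (Γ j) * finrank (MonoidAlgebra K (Γ j))ᵐᵒᵖ (A i j)
      = finrank K (A i j) := by
    rw [← cardEop j]; exact Module.finrank_mul_finrank K (MonoidAlgebra K (Γ j))ᵐᵒᵖ (A i j)
  have h3 : Fintype.card (Γ i) * finrank (MonoidAlgebra K (Γ i)) (A i j)
      = finrank K (A i j) := by
    rw [← cardE i]; exact Module.finrank_mul_finrank K (MonoidAlgebra K (Γ i)) (A i j)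
  have h4 : Fintype.card (Γ i) * finrank (MonoidAlgebra K (Γ i))ᵐᵒᵖ (A j i)
      = finrank K (A j i) := by
    rw [← cardEop i]; exact Module.finrank_mul_finrank K (MonoidAlgebra K (Γ i))ᵐᵒᵖ (A j i)
  rw [hB i j, hB j i]
  have h1' := congrArg (Nat.cast : ℕ → ℤ) h1
  have h2' := congrArg (Nat.cast : ℕ → ℤ) h2
  have h3' := congrArg (Nat.cast : ℕ → ℤ) h3
  have h4' := congrArg (Nat.cast : ℕ → ℤ) h4
  push_cast at h1' h2' h3' h4' ⊢
  linarith
end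

section
/- Let K be a field, G a finite abelian group whose order is invertible in K, and R = K[G] its group algebra (a commutative K-algebra). Let X and A be finite-dimensional R-modules. Equip the K-linear duals X^* = Hom_K(X, K) and A^* = Hom_K(A, K) with the R-module structure (r·f)(m) = f(r·m). Then the map Φ : X^* ⊗_R A^* → (X ⊗_R A)^* determined by Φ(φ ⊗ ψ)(x ⊗ a) = |G|^{-1} · Σ_{g ∈ G} φ(g·x) · ψ(g^{-1}·a) is a well-defined K-linear isomorphism. -/
open TensorProduct Module

section DualModule

variable (K : Type*) [Field K] (G : Type*) [CommGroup G] [Fintype G]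
variable (X : Type*) [AddCommGroup X] [Module K X] [Module (MonoidAlgebra K G) X]
  [IsScalarTower K (MonoidAlgebra K G) X]

/-- The action of `R = K[G]` on the `K`-linear dual of an `R`-module: `(r • f) x = f (r • x)`
(legitimate since `R` is commutative). -/
noncomputable instance dualSMul : SMul (MonoidAlgebra K G) (Module.Dual K X) :=
  ⟨fun r f => f ∘ₗ DistribMulAction.toLinearMap K X r⟩

lemma dual_smul_apply (r : MonoidAlgebra K G) (f : Module.Dual K X) (x : X) :
    (r • f) x = f (r • x) := rfl

noncomputable instance dualModule : Module (MonoidAlgebra K G) (Module.Dual K X) where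
  one_smul f := LinearMap.ext fun x => by rw [dual_smul_apply, one_smul]
  mul_smul r s f := LinearMap.ext fun x => by
    rw [dual_smul_apply, dual_smul_apply, dual_smul_apply, mul_comm r s, mul_smul]
  smul_zero r := LinearMap.ext fun x => by simp [dual_smul_apply]
  smul_add r f g := LinearMap.ext fun x => by simp [dual_smul_apply]
  add_smul r s f := LinearMap.ext fun x => by
    rw [LinearMap.add_apply, dual_smul_apply, dual_smul_apply, dual_smul_apply, add_smul,
      map_add]
  zero_smul f := LinearMap.ext fun x => by
    rw [dual_smul_apply, zero_smul, map_zero, LinearMap.zero_apply]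

instance : SMulCommClass (MonoidAlgebra K G) K (Module.Dual K X) :=
  ⟨fun r k f => LinearMap.ext fun x => by simp [dual_smul_apply]⟩

end DualModule


/-- Lift a `K`-bilinear, `R`-balanced map to the tensor product over `R`. -/
noncomputable def liftBal {R K M N P : Type*} [CommRing R] [CommRing K]
    [AddCommGroup M] [AddCommGroup N] [AddCommGroup P]
    [Module R M] [Module R N] [Module K M] [Module K N] [Module K P]
    [SMulCommClass R K M]
    (f : M →ₗ[K] N →ₗ[K] P) (hf : ∀ (r : R) (m : M) (n : N), f (r • m) n = f m (r • n)) :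
    M ⊗[R] N →ₗ[K] P where
  toFun := TensorProduct.liftAddHom
    { toFun := fun m => (f m).toAddMonoidHom
      map_zero' := by ext; simp
      map_add' := by intros; ext; simp } (by intro r m n; exact hf r m n)
  map_add' := by simp
  map_smul' := fun k t => by
    induction t using TensorProduct.induction_on with
    | zero => simp
    | tmul m n =>
        rw [smul_tmul']
        simp only [TensorProduct.liftAddHom_tmul, RingHom.id_apply]
        show f (k • m) n = k • f m n
        rw [map_smul, LinearMap.smul_apply]
    | add s t hs ht =>
        simp only [RingHom.id_apply] at hs ht ⊢
        rw [smul_add, AddMonoidHom.map_add, AddMonoidHom.map_add, hs, ht, smul_add]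

@[simp] lemma liftBal_tmul {R K M N P : Type*} [CommRing R] [CommRing K]
    [AddCommGroup M] [AddCommGroup N] [AddCommGroup P]
    [Module R M] [Module R N] [Module K M] [Module K N] [Module K P]
    [SMulCommClass R K M]
    (f : M →ₗ[K] N →ₗ[K] P) (hf) (m : M) (n : N) :
    liftBal f hf (m ⊗ₜ[R] n) = f m n := rfl

noncomputable section Main
open Module

variable (K : Type*) [Field K] (G : Type*) [CommGroup G] [Fintype G]
variable (X : Type*) [AddCommGroup X] [Module K X] [Module (MonoidAlgebra K G) X]
  [IsScalarTower K (MonoidAlgebra K G) X]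
variable (A : Type*) [AddCommGroup A] [Module K A] [Module (MonoidAlgebra K G) A]
  [IsScalarTower K (MonoidAlgebra K G) A]

local notation "R" => MonoidAlgebra K G

omit [Fintype G] in
lemma of_smul_of_smul {M : Type*} [AddCommGroup M] [Module (MonoidAlgebra K G) M]
    (g h : G) (m : M) :
    MonoidAlgebra.of K G g • MonoidAlgebra.of K G h • m = MonoidAlgebra.of K G (g * h) • m := by
  rw [← mul_smul, ← map_mul]

lemma ksmul_eq_algebraMap_smul (k : K) (x : X) : k • x = (algebraMap K R k) • x := by
  rw [algebraMap_smul]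

lemma dual_ksmul_eq_algebraMap_smul (k : K) (φ : Dual K X) :
    k • φ = (algebraMap K R k) • φ := by
  ext x
  rw [LinearMap.smul_apply, dual_smul_apply, algebraMap_smul, map_smul]

lemma dual_ksmul_rsmul (k : K) (r : R) (φ : Dual K X) :
    (k • r) • φ = k • (r • φ) := by
  ext x
  rw [dual_smul_apply, smul_assoc, map_smul, LinearMap.smul_apply, dual_smul_apply]

/-- The averaged bilinear pairing `X → A → K` attached to a functional on `X ⊗[K] A`. -/
def bD (D : Dual K (X ⊗[K] A)) : X →ₗ[K] A →ₗ[K] K :=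
  LinearMap.mk₂ K
    (fun x a => (Fintype.card G : K)⁻¹ *
      ∑ g : G, D ((MonoidAlgebra.of K G g • x) ⊗ₜ[K] (MonoidAlgebra.of K G g⁻¹ • a)))
    (fun x y a => by
      simp only [smul_add, TensorProduct.add_tmul, map_add, Finset.sum_add_distrib]
      ring)
    (fun k x a => by
      simp only [smul_comm _ k, ← TensorProduct.smul_tmul', map_smul, smul_eq_mul,
        ← Finset.mul_sum]
      ring)
    (fun x a b => by
      simp only [smul_add, TensorProduct.tmul_add, map_add, Finset.sum_add_distrib]
      ring)
    (fun k x a => by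
      simp only [smul_comm _ k, TensorProduct.tmul_smul, map_smul, smul_eq_mul,
        ← Finset.mul_sum]
      ring)

lemma bD_apply (D : Dual K (X ⊗[K] A)) (x : X) (a : A) :
    bD K G X A D x a = (Fintype.card G : K)⁻¹ *
      ∑ g : G, D ((MonoidAlgebra.of K G g • x) ⊗ₜ[K] (MonoidAlgebra.of K G g⁻¹ • a)) := rfl

lemma bD_balanced (D : Dual K (X ⊗[K] A)) (r : R) (x : X) (a : A) :
    bD K G X A D (r • x) a = bD K G X A D x (r • a) := by
  induction r using MonoidAlgebra.induction_on with
  | of h =>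
      simp only [bD_apply]
      congr 1
      refine Fintype.sum_equiv (Equiv.mulRight h) _ _ (fun g => ?_)
      simp only [Equiv.coe_mulRight, of_smul_of_smul]
      rw [show (g * h)⁻¹ * h = g⁻¹ by
        rw [mul_inv_rev, mul_comm h⁻¹ g⁻¹, mul_assoc, inv_mul_cancel, mul_one]]
  | add r s hr hs => rw [add_smul, add_smul, map_add, LinearMap.add_apply, hr, hs, map_add]
  | smul k r hr =>
      rw [smul_assoc, smul_assoc, LinearMap.map_smul (bD K G X A D), LinearMap.smul_apply, hr,
        LinearMap.map_smul (bD K G X A D x)]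

/-- The averaging operator from the dual of `X ⊗[K] A` to the dual of `X ⊗[R] A`. -/
def avg : Dual K (X ⊗[K] A) →ₗ[K] Dual K (X ⊗[MonoidAlgebra K G] A) where
  toFun D := liftBal (bD K G X A D) (bD_balanced K G X A D)
  map_add' D E := LinearMap.ext fun t => by
    induction t using TensorProduct.induction_on with
    | zero => simp
    | tmul x a =>
        simp only [liftBal_tmul, bD_apply, LinearMap.add_apply, map_add, mul_add,
          Finset.sum_add_distrib]
    | add s t hs ht => simp_all [map_add]
  map_smul' k D := LinearMap.ext fun t => by
    induction t using TensorProduct.induction_on with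
    | zero => simp
    | tmul x a =>
        simp only [liftBal_tmul, bD_apply, LinearMap.smul_apply, RingHom.id_apply, map_smul,
          smul_eq_mul, ← Finset.mul_sum]
        ring
    | add s t hs ht => simp_all [map_add]

lemma avg_tmul (D : Dual K (X ⊗[K] A)) (x : X) (a : A) :
    avg K G X A D (x ⊗ₜ[MonoidAlgebra K G] a) = bD K G X A D x a := rfl

/-- The bilinear map underlying `Φ`. -/
def cmap : Dual K X →ₗ[K] Dual K A →ₗ[K] Dual K (X ⊗[MonoidAlgebra K G] A) :=
  (TensorProduct.mk K (Dual K X) (Dual K A)).compr₂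
    ((avg K G X A) ∘ₗ TensorProduct.dualDistrib K X A)

lemma cmap_apply (φ : Dual K X) (ψ : Dual K A) (x : X) (a : A) :
    cmap K G X A φ ψ (x ⊗ₜ[MonoidAlgebra K G] a)
      = (Fintype.card G : K)⁻¹ *
        ∑ g : G, φ (MonoidAlgebra.of K G g • x) * ψ (MonoidAlgebra.of K G g⁻¹ • a) := by
  simp only [cmap, LinearMap.compr₂_apply, TensorProduct.mk_apply, LinearMap.comp_apply,
    avg_tmul, bD_apply, TensorProduct.dualDistrib_apply]

lemma cmap_balanced (r : MonoidAlgebra K G) (φ : Dual K X) (ψ : Dual K A) :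
    cmap K G X A (r • φ) ψ = cmap K G X A φ (r • ψ) := by
  induction r using MonoidAlgebra.induction_on with
  | of h =>
      refine LinearMap.ext fun t => ?_
      induction t using TensorProduct.induction_on with
      | zero => rw [map_zero, map_zero]
      | add s t hs ht => rw [map_add, map_add, hs, ht]
      | tmul x a =>
          simp only [cmap_apply, dual_smul_apply]
          congr 1
          refine Fintype.sum_equiv (Equiv.mulRight h) _ _ (fun g => ?_)
          simp only [Equiv.coe_mulRight, of_smul_of_smul]
          rw [show h * g = g * h from mul_comm h g, show h * (g * h)⁻¹ = g⁻¹ by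
            rw [mul_inv_rev, ← mul_assoc, mul_inv_cancel, one_mul]]
  | add r s hr hs =>
      rw [add_smul, add_smul, map_add, LinearMap.add_apply, hr, hs, map_add]
  | smul k r hr =>
      rw [dual_ksmul_rsmul, dual_ksmul_rsmul, LinearMap.map_smul₂, hr,
        ← LinearMap.map_smul (cmap K G X A φ)]

/-- The forward map `Φ`. -/
def Phi : (Dual K X) ⊗[MonoidAlgebra K G] (Dual K A) →ₗ[K]
    Dual K (X ⊗[MonoidAlgebra K G] A) :=
  liftBal (cmap K G X A) (cmap_balanced K G X A)

lemma Phi_tmul (φ : Dual K X) (ψ : Dual K A) :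
    Phi K G X A (φ ⊗ₜ ψ) = cmap K G X A φ ψ := rfl

/-- canonical map `X ⊗[K] A → X ⊗[R] A`. -/
def qmap : X ⊗[K] A →ₗ[K] X ⊗[MonoidAlgebra K G] A :=
  TensorProduct.lift (LinearMap.mk₂ K (fun x a => x ⊗ₜ[MonoidAlgebra K G] a)
    (fun x y a => TensorProduct.add_tmul x y a)
    (fun k x a => (TensorProduct.smul_tmul' k x a).symm)
    (fun x a b => TensorProduct.tmul_add x a b)
    (fun k x a => by
      beta_reduce
      rw [ksmul_eq_algebraMap_smul K G A, TensorProduct.tmul_smul, algebraMap_smul]))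

lemma qmap_tmul (x : X) (a : A) :
    qmap K G X A (x ⊗ₜ[K] a) = x ⊗ₜ[MonoidAlgebra K G] a := rfl

lemma dual_tmul_smul (k : K) (φ : Dual K X) (ψ : Dual K A) :
    (k • φ) ⊗ₜ[MonoidAlgebra K G] ψ = φ ⊗ₜ[MonoidAlgebra K G] (k • ψ) := by
  rw [dual_ksmul_eq_algebraMap_smul K G X k φ, dual_ksmul_eq_algebraMap_smul K G A k ψ,
    TensorProduct.smul_tmul]

/-- canonical map `X^* ⊗[K] A^* → X^* ⊗[R] A^*`. -/
def pmap : (Dual K X) ⊗[K] (Dual K A) →ₗ[K]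
    (Dual K X) ⊗[MonoidAlgebra K G] (Dual K A) :=
  TensorProduct.lift (LinearMap.mk₂ K (fun φ ψ => φ ⊗ₜ[MonoidAlgebra K G] ψ)
    (fun x y a => TensorProduct.add_tmul x y a)
    (fun k x a => (TensorProduct.smul_tmul' k x a).symm)
    (fun x a b => TensorProduct.tmul_add x a b)
    (fun k x a => by
      beta_reduce
      rw [← dual_tmul_smul, ← TensorProduct.smul_tmul']))

lemma pmap_tmul (φ : Dual K X) (ψ : Dual K A) :
    pmap K G X A (φ ⊗ₜ[K] ψ) = φ ⊗ₜ[MonoidAlgebra K G] ψ := rfl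

lemma Phi_pmap (t : (Dual K X) ⊗[K] (Dual K A)) :
    Phi K G X A (pmap K G X A t) = avg K G X A (TensorProduct.dualDistrib K X A t) := by
  induction t using TensorProduct.induction_on with
  | zero => simp
  | tmul φ ψ => rw [pmap_tmul, Phi_tmul]; rfl
  | add s t hs ht => rw [map_add, map_add, map_add, map_add, hs, ht]

lemma avg_qmap_dualMap (hG : (Fintype.card G : K) ≠ 0) (F : Dual K (X ⊗[MonoidAlgebra K G] A)) :
    avg K G X A ((qmap K G X A).dualMap F) = F := by
  refine LinearMap.ext fun t => ?_
  induction t using TensorProduct.induction_on with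
  | zero => simp
  | add s t hs ht => rw [map_add, map_add, hs, ht]
  | tmul x a =>
      rw [avg_tmul, bD_apply]
      have key : ∀ g : G, (MonoidAlgebra.of K G g • x) ⊗ₜ[MonoidAlgebra K G]
          (MonoidAlgebra.of K G g⁻¹ • a) = x ⊗ₜ[MonoidAlgebra K G] a := fun g => by
        rw [TensorProduct.smul_tmul, of_smul_of_smul, mul_inv_cancel, map_one, one_smul]
      simp only [LinearMap.dualMap_apply, qmap_tmul, key, Finset.sum_const, Finset.card_univ,
        nsmul_eq_mul]
      rw [← mul_assoc, inv_mul_cancel₀ hG, one_mul]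
section FD
variable [FiniteDimensional K X] [FiniteDimensional K A]

/-- The inverse map `Ψ`. -/
def Psi : Dual K (X ⊗[MonoidAlgebra K G] A) →ₗ[K]
    (Dual K X) ⊗[MonoidAlgebra K G] (Dual K A) :=
  pmap K G X A ∘ₗ (TensorProduct.dualDistribEquiv K X A).symm.toLinearMap ∘ₗ
    (qmap K G X A).dualMap

lemma dde_apply (t : Dual K X ⊗[K] Dual K A) :
    TensorProduct.dualDistribEquiv K X A t = TensorProduct.dualDistrib K X A t := rfl

lemma Phi_Psi (hG : (Fintype.card G : K) ≠ 0) (F : Dual K (X ⊗[MonoidAlgebra K G] A)) :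
    Phi K G X A (Psi K G X A F) = F := by
  rw [Psi, LinearMap.comp_apply, LinearMap.comp_apply, LinearEquiv.coe_coe, Phi_pmap,
    ← dde_apply, LinearEquiv.apply_symm_apply, avg_qmap_dualMap K G X A hG]

lemma Psi_Phi (hG : (Fintype.card G : K) ≠ 0)
    (t : (Dual K X) ⊗[MonoidAlgebra K G] (Dual K A)) :
    Psi K G X A (Phi K G X A t) = t := by
  induction t using TensorProduct.induction_on with
  | zero => rw [map_zero, map_zero]
  | add s t hs ht => rw [map_add, map_add, hs, ht]
  | tmul φ ψ =>
      set s : Dual K X ⊗[K] Dual K A := (Fintype.card G : K)⁻¹ •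
        ∑ g : G, (MonoidAlgebra.of K G g • φ) ⊗ₜ[K] (MonoidAlgebra.of K G g⁻¹ • ψ) with hs
      have h1 : (qmap K G X A).dualMap (Phi K G X A (φ ⊗ₜ ψ))
          = TensorProduct.dualDistribEquiv K X A s := by
        refine LinearMap.ext fun u => ?_
        induction u using TensorProduct.induction_on with
        | zero => rw [map_zero, map_zero]
        | add u v hu hv => rw [map_add, map_add, hu, hv]
        | tmul x a =>
            rw [LinearMap.dualMap_apply, qmap_tmul, Phi_tmul, cmap_apply, dde_apply, hs]
            simp only [map_smul, map_sum, LinearMap.smul_apply, LinearMap.coe_sum,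
              Finset.sum_apply, TensorProduct.dualDistrib_apply, dual_smul_apply, smul_eq_mul]
      rw [Psi, LinearMap.comp_apply, LinearMap.comp_apply, LinearEquiv.coe_coe, h1,
        LinearEquiv.symm_apply_apply, hs, map_smul, map_sum]
      simp only [pmap_tmul]
      have h2 : ∀ g : G, (MonoidAlgebra.of K G g • φ) ⊗ₜ[MonoidAlgebra K G]
          (MonoidAlgebra.of K G g⁻¹ • ψ) = φ ⊗ₜ[MonoidAlgebra K G] ψ := fun g => by
        rw [TensorProduct.smul_tmul, of_smul_of_smul K G g g⁻¹ ψ, mul_inv_cancel,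
          map_one, one_smul]
      simp only [h2, Finset.sum_const, Finset.card_univ]
      rw [← Nat.cast_smul_eq_nsmul K, smul_smul, inv_mul_cancel₀ hG, one_smul]

end FD
end Main

/-- For a finite abelian group `G` whose order is invertible in `K`, and finite-dimensional
`K[G]`-modules `X` and `A`, the map `φ ⊗ ψ ↦ ((x ⊗ a) ↦ |G|⁻¹ ∑_{g} φ(g•x) ψ(g⁻¹•a))`
is a well-defined `K`-linear isomorphism `X^* ⊗_{K[G]} A^* ≃ (X ⊗_{K[G]} A)^*`. -/
theorem dual_tensor_dual_equiv (K : Type*) [Field K] (G : Type*) [CommGroup G] [Fintype G]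
    [DecidableEq G] (hG : (Fintype.card G : K) ≠ 0)
    (X : Type*) [AddCommGroup X] [Module K X] [Module (MonoidAlgebra K G) X]
    [IsScalarTower K (MonoidAlgebra K G) X] [FiniteDimensional K X]
    (A : Type*) [AddCommGroup A] [Module K A] [Module (MonoidAlgebra K G) A]
    [IsScalarTower K (MonoidAlgebra K G) A] [FiniteDimensional K A] :
    ∃ Φ : (Module.Dual K X) ⊗[MonoidAlgebra K G] (Module.Dual K A) ≃ₗ[K]
        Module.Dual K (X ⊗[MonoidAlgebra K G] A),
      ∀ (φ : Module.Dual K X) (ψ : Module.Dual K A) (x : X) (a : A),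
        Φ (φ ⊗ₜ ψ) (x ⊗ₜ a)
          = (Fintype.card G : K)⁻¹ *
            ∑ g : G, φ (MonoidAlgebra.of K G g • x) * ψ (MonoidAlgebra.of K G g⁻¹ • a) := by
  refine ⟨LinearEquiv.ofLinear (Phi K G X A) (Psi K G X A)
    (LinearMap.ext fun F => Phi_Psi K G X A hG F)
    (LinearMap.ext fun t => Psi_Phi K G X A hG t), fun φ ψ x a => ?_⟩
  rw [LinearEquiv.ofLinear_apply, Phi_tmul, cmap_apply]
end

section
/- Let Γ and Γ' be finite abelian groups with |Γ| = 2·|Γ'|, and let V be a finite-dimensional complex vector space equipped with commuting linear actions of Γ and Γ' (equivalently, a (ℂ[Γ], ℂ[Γ'])-bimodule, all groups being abelian). Suppose V is free of rank 1 as a ℂ[Γ]-module and free of rank 2 as a ℂ[Γ']-module. Then the subspace V^{Γ'} of Γ'-invariant vectors is a 2-dimensional Γ-stable subspace of V which decomposes as a direct sum of two non-isomorphic 1-dimensional representations of Γ. -/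
open Module

open MonoidAlgebra Polynomial

section SmulEnd

variable {A : Type*} [CommSemiring A] [Algebra ℂ A]
variable {V : Type*} [AddCommGroup V] [Module ℂ V] [Module A V] [IsScalarTower ℂ A V]

/-- The action of `a : A` as a `ℂ`-linear endomorphism of `V`. -/
noncomputable def smulEnd (a : A) : V →ₗ[ℂ] V where
  toFun v := a • v
  map_add' := smul_add a
  map_smul' c v := (smul_comm c a v).symm

@[simp] lemma smulEnd_apply (a : A) (v : V) : smulEnd a v = a • v := rfl

lemma smulEnd_pow (a : A) (n : ℕ) : (smulEnd a : V →ₗ[ℂ] V) ^ n = smulEnd (a ^ n) := by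
  induction n with
  | zero => ext v; simp
  | succ n ih =>
    ext v
    simp only [pow_succ, Module.End.mul_apply, ih, smulEnd_apply]
    exact (mul_smul _ _ _).symm

end SmulEnd

section Invariants

variable (G : Type*) [CommGroup G] [Fintype G]
variable (W : Type*) [AddCommGroup W] [Module ℂ W] [Module (MonoidAlgebra ℂ G) W]
  [IsScalarTower ℂ (MonoidAlgebra ℂ G) W]

/-- The submodule of `G`-invariant vectors. -/
noncomputable def invariants : Submodule ℂ W :=
  ⨅ g : G, LinearMap.ker (smulEnd (MonoidAlgebra.of ℂ G g) - LinearMap.id)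

lemma mem_invariants {w : W} :
    w ∈ invariants G W ↔ ∀ g : G, MonoidAlgebra.of ℂ G g • w = w := by
  simp [invariants, Submodule.mem_iInf, LinearMap.mem_ker, sub_eq_zero]

/-- The sum of all group elements in the group algebra. -/
noncomputable def sumSingle : MonoidAlgebra ℂ G := ∑ g : G, MonoidAlgebra.single g 1

lemma sumSingle_apply (h : G) : (sumSingle G).coeff h = 1 := by
  classical
  rw [sumSingle, MonoidAlgebra.coeff_sum, Finsupp.finset_sum_apply]
  simp [Finsupp.single_apply]

lemma invariants_groupAlgebra :
    invariants G (MonoidAlgebra ℂ G) = ℂ ∙ (sumSingle G) := by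
  classical
  apply le_antisymm
  · intro x hx
    rw [mem_invariants] at hx
    have hx' : ∀ h : G, x.coeff h = x.coeff 1 := by
      intro h
      have h1 := congrArg (fun f : MonoidAlgebra ℂ G => f.coeff h) (hx h)
      simpa [MonoidAlgebra.of_apply, smul_eq_mul, MonoidAlgebra.single_mul_apply] using h1.symm
    refine Submodule.mem_span_singleton.mpr ⟨x.coeff 1, ?_⟩
    ext h
    have hcoe : (x.coeff 1 • sumSingle G).coeff h = x.coeff 1 * (sumSingle G).coeff h := rfl
    rw [hcoe, sumSingle_apply, mul_one, hx' h]
  · rw [Submodule.span_singleton_le_iff_mem, mem_invariants]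
    intro g
    rw [MonoidAlgebra.of_apply, smul_eq_mul, sumSingle, Finset.mul_sum]
    simp only [MonoidAlgebra.single_mul_single, one_mul]
    exact Fintype.sum_equiv (Equiv.mulLeft g) _ _ (fun h => rfl)

lemma finrank_invariants_groupAlgebra :
    finrank ℂ (invariants G (MonoidAlgebra ℂ G)) = 1 := by
  rw [invariants_groupAlgebra, finrank_span_singleton]
  intro h
  have := congrArg (fun f : MonoidAlgebra ℂ G => f.coeff 1) h
  simp [sumSingle_apply] at this

/-- Invariants of a finite power of the group algebra. -/
noncomputable def invariantsPiEquiv (n : ℕ) :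
    (invariants G (Fin n → MonoidAlgebra ℂ G)) ≃ₗ[ℂ]
      (Fin n → invariants G (MonoidAlgebra ℂ G)) where
  toFun x i := ⟨x.1 i, by
    have hx := (mem_invariants G _).mp x.2
    refine (mem_invariants G _).mpr fun g => ?_
    have h := congrFun (hx g) i
    simpa using h⟩
  map_add' x y := rfl
  map_smul' c x := rfl
  invFun y := ⟨fun i => (y i).1, (mem_invariants G _).mpr fun g => funext fun i => by
    have h := (mem_invariants G _).mp (y i).2 g
    simpa using h⟩
  left_inv x := rfl
  right_inv y := rfl

lemma finrank_invariants_pi :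
    finrank ℂ (invariants G (Fin 2 → MonoidAlgebra ℂ G)) = 2 := by
  rw [(invariantsPiEquiv G 2).finrank_eq]
  have h1 := finrank_invariants_groupAlgebra G
  haveI : FiniteDimensional ℂ (invariants G (MonoidAlgebra ℂ G)) := by
    rw [invariants_groupAlgebra]; infer_instance
  rw [Module.finrank_pi_fintype]
  simp [h1]

variable {W} {W' : Type*} [AddCommGroup W'] [Module ℂ W'] [Module (MonoidAlgebra ℂ G) W']
  [IsScalarTower ℂ (MonoidAlgebra ℂ G) W']

lemma map_invariants (e : W ≃ₗ[MonoidAlgebra ℂ G] W') :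
    (invariants G W).map ((e.restrictScalars ℂ : W ≃ₗ[ℂ] W') : W →ₗ[ℂ] W')
      = invariants G W' := by
  ext w'
  simp only [Submodule.mem_map, mem_invariants]
  constructor
  · rintro ⟨w, hw, rfl⟩ g
    have : e (MonoidAlgebra.of ℂ G g • w) = MonoidAlgebra.of ℂ G g • e w := map_smul e _ w
    simp only [LinearEquiv.coe_coe, LinearEquiv.restrictScalars_apply]
    rw [← this, hw g]
  · intro hw'
    refine ⟨e.symm w', fun g => ?_, by simp⟩
    have : e.symm (MonoidAlgebra.of ℂ G g • w') = MonoidAlgebra.of ℂ G g • e.symm w' :=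
      map_smul e.symm _ w'
    rw [← this, hw' g]

lemma finrank_invariants_eq (e : W ≃ₗ[MonoidAlgebra ℂ G] W') :
    finrank ℂ (invariants G W) = finrank ℂ (invariants G W') := by
  rw [← map_invariants G e, LinearEquiv.finrank_map_eq]

/-- If every group element acts on a subspace of the group algebra by a scalar, the
subspace has dimension at most one. -/
lemma finrank_le_one_of_scalar (F' : Submodule ℂ (MonoidAlgebra ℂ G))
    (h : ∀ g : G, ∃ c : ℂ, ∀ v ∈ F', MonoidAlgebra.of ℂ G g • v = c • v) :
    finrank ℂ F' ≤ 1 := by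
  classical
  let φ : F' →ₗ[ℂ] ℂ :=
    { toFun := fun v => (v : MonoidAlgebra ℂ G).coeff 1
      map_add' := fun v w => rfl
      map_smul' := fun c v => rfl }
  have hφ : Function.Injective φ := by
    intro v w hvw
    have hkey : ∀ u : F', φ u = 0 → (u : F') = 0 := by
      intro u hu
      have hcoef : ∀ g : G, (u : MonoidAlgebra ℂ G).coeff g = 0 := by
        intro g
        obtain ⟨c, hc⟩ := h g
        have h1 : MonoidAlgebra.of ℂ G g • (u : MonoidAlgebra ℂ G) = c • u := hc u u.2
        rw [MonoidAlgebra.of_apply, smul_eq_mul] at h1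
        have h2 := congrArg (fun f : MonoidAlgebra ℂ G => f.coeff g) h1
        simp only [MonoidAlgebra.single_mul_apply, one_mul, inv_mul_cancel] at h2
        have h3 : (u : MonoidAlgebra ℂ G).coeff 1 = c * (u : MonoidAlgebra ℂ G).coeff g := by
          simpa using h2
        by_cases hc0 : c = 0
        · subst hc0
          have h4 : MonoidAlgebra.single g (1:ℂ) * (u : MonoidAlgebra ℂ G) = 0 := by
            rw [h1, zero_smul]
          have h5 := congrArg (fun f => MonoidAlgebra.single g⁻¹ (1:ℂ) * f) h4
          simp only [← mul_assoc, MonoidAlgebra.single_mul_single, inv_mul_cancel,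
            one_mul, mul_zero] at h5
          rw [← MonoidAlgebra.one_def, one_mul] at h5
          rw [h5]; rfl
        · have : c * (u : MonoidAlgebra ℂ G).coeff g = 0 := by
            rw [← h3]; exact hu
          exact (mul_eq_zero.mp this).resolve_left hc0
      have hu0 : (u : MonoidAlgebra ℂ G) = 0 := by
        ext a
        exact hcoef a
      exact Subtype.ext hu0
    have h0 : φ (v - w) = 0 := by
      rw [map_sub, hvw, sub_self]
    have := hkey (v - w) h0
    exact sub_eq_zero.mp this
  calc finrank ℂ F' ≤ finrank ℂ ℂ := LinearMap.finrank_le_finrank_of_injective hφ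
  _ = 1 := Module.finrank_self ℂ

end Invariants



/-- Let `Γ`, `Γ'` be finite abelian groups with `|Γ| = 2|Γ'|`, and `V` a finite-dimensional
complex vector space with commuting linear actions of `Γ` and `Γ'` which is free of rank 1
over `ℂ[Γ]` and free of rank 2 over `ℂ[Γ']`. Then the subspace of `Γ'`-invariants is a
2-dimensional `Γ`-stable subspace which is the direct sum of two non-isomorphic
1-dimensional representations of `Γ`. -/
theorem invariants_decompose (Γ Γ' : Type*) [CommGroup Γ] [CommGroup Γ']
    [Fintype Γ] [Fintype Γ'] (hcard : Fintype.card Γ = 2 * Fintype.card Γ')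
    (V : Type*) [AddCommGroup V] [Module ℂ V] [FiniteDimensional ℂ V]
    [Module (MonoidAlgebra ℂ Γ) V] [Module (MonoidAlgebra ℂ Γ') V]
    [IsScalarTower ℂ (MonoidAlgebra ℂ Γ) V] [IsScalarTower ℂ (MonoidAlgebra ℂ Γ') V]
    [SMulCommClass (MonoidAlgebra ℂ Γ) (MonoidAlgebra ℂ Γ') V]
    (hfree1 : Nonempty (V ≃ₗ[MonoidAlgebra ℂ Γ] MonoidAlgebra ℂ Γ))
    (hfree2 : Nonempty (V ≃ₗ[MonoidAlgebra ℂ Γ'] (Fin 2 → MonoidAlgebra ℂ Γ'))) :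
    ∃ F : Submodule ℂ V,
      -- `F` is the subspace of `Γ'`-invariant vectors
      (∀ v : V, v ∈ F ↔ ∀ g : Γ', MonoidAlgebra.of ℂ Γ' g • v = v) ∧
      -- it is 2-dimensional
      finrank ℂ F = 2 ∧
      -- it is `Γ`-stable
      (∀ (g : Γ), ∀ v ∈ F, MonoidAlgebra.of ℂ Γ g • v ∈ F) ∧
      -- and it decomposes as the direct sum of two non-isomorphic one-dimensional
      -- representations of `Γ`
      ∃ W₁ W₂ : Submodule ℂ V,
        W₁ ≤ F ∧ W₂ ≤ F ∧
        (∀ (g : Γ), ∀ v ∈ W₁, MonoidAlgebra.of ℂ Γ g • v ∈ W₁) ∧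
        (∀ (g : Γ), ∀ v ∈ W₂, MonoidAlgebra.of ℂ Γ g • v ∈ W₂) ∧
        finrank ℂ W₁ = 1 ∧ finrank ℂ W₂ = 1 ∧
        W₁ ⊓ W₂ = ⊥ ∧ W₁ ⊔ W₂ = F ∧
        -- non-isomorphic as representations of `Γ`: there is no `ℂ`-linear equivalence
        -- `W₁ ≃ W₂` commuting with the `Γ`-action
        ¬ ∃ e : W₁ ≃ₗ[ℂ] W₂, ∀ (g : Γ) (v : V) (hv : v ∈ W₁)
            (hgv : MonoidAlgebra.of ℂ Γ g • v ∈ W₁),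
            ((e ⟨MonoidAlgebra.of ℂ Γ g • v, hgv⟩ : W₂) : V)
              = MonoidAlgebra.of ℂ Γ g • ((e ⟨v, hv⟩ : W₂) : V) := by
  classical
  obtain ⟨e₁⟩ := hfree1
  obtain ⟨e₂⟩ := hfree2
  set F : Submodule ℂ V := invariants Γ' V with hFdef
  have hmemF : ∀ v : V, v ∈ F ↔ ∀ g : Γ', MonoidAlgebra.of ℂ Γ' g • v = v :=
    fun v => mem_invariants Γ' V
  have hF2 : finrank ℂ F = 2 := by
    rw [hFdef, finrank_invariants_eq Γ' e₂, finrank_invariants_pi]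
  have hFstable : ∀ (g : Γ), ∀ v ∈ F, MonoidAlgebra.of ℂ Γ g • v ∈ F := by
    intro g v hv
    rw [hmemF] at hv ⊢
    intro g'
    rw [← smul_comm (MonoidAlgebra.of ℂ Γ g) (MonoidAlgebra.of ℂ Γ' g') v, hv g']
  -- some group element does not act by a scalar on `F`
  have hns : ¬ ∀ g : Γ, ∃ c : ℂ, ∀ v ∈ F, MonoidAlgebra.of ℂ Γ g • v = c • v := by
    intro hall
    have hle : finrank ℂ
        (F.map ((e₁.restrictScalars ℂ : V ≃ₗ[ℂ] MonoidAlgebra ℂ Γ) :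
          V →ₗ[ℂ] MonoidAlgebra ℂ Γ)) ≤ 1 := by
      apply finrank_le_one_of_scalar
      intro g
      obtain ⟨c, hc⟩ := hall g
      refine ⟨c, ?_⟩
      rintro v' ⟨v, hv, rfl⟩
      simp only [LinearEquiv.coe_coe, LinearEquiv.restrictScalars_apply]
      have h1 : e₁ (MonoidAlgebra.of ℂ Γ g • v) = MonoidAlgebra.of ℂ Γ g • e₁ v :=
        map_smul e₁ _ v
      have h2 : e₁ (c • v) = c • e₁ v := (e₁.restrictScalars ℂ).map_smul c v
      rw [← h1, hc v hv, h2]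
    rw [LinearEquiv.finrank_map_eq] at hle
    omega
  push_neg at hns
  obtain ⟨g₀, hg₀⟩ := hns
  set a₀ : MonoidAlgebra ℂ Γ := MonoidAlgebra.of ℂ Γ g₀ with ha₀def
  set T : V →ₗ[ℂ] V := smulEnd a₀ with hTdef
  set N : ℕ := Fintype.card Γ with hNdef
  have hN0 : N ≠ 0 := Fintype.card_ne_zero
  have hTN : T ^ N = 1 := by
    rw [hTdef, smulEnd_pow]
    have : a₀ ^ N = 1 := by
      rw [ha₀def, ← map_pow, pow_card_eq_one, map_one]
    rw [this]
    ext v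
    simp
  have hTapp : ∀ v : V, T v = MonoidAlgebra.of ℂ Γ g₀ • v := fun v => rfl
  have hTg : ∀ (g : Γ) (v : V),
      T (MonoidAlgebra.of ℂ Γ g • v) = MonoidAlgebra.of ℂ Γ g • T v := by
    intro g v
    rw [hTapp, hTapp, ← mul_smul, ← mul_smul, mul_comm]
  have hTng : ∀ (n : ℕ) (g : Γ) (v : V),
      (T ^ n) (MonoidAlgebra.of ℂ Γ g • v) = MonoidAlgebra.of ℂ Γ g • (T ^ n) v := by
    intro n
    induction n with
    | zero => intro g v; simp
    | succ n ih =>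
      intro g v
      calc (T ^ (n+1)) (MonoidAlgebra.of ℂ Γ g • v)
          = (T ^ n) (T (MonoidAlgebra.of ℂ Γ g • v)) := by
            rw [pow_succ, Module.End.mul_apply]
        _ = (T ^ n) (MonoidAlgebra.of ℂ Γ g • T v) := by rw [hTg]
        _ = MonoidAlgebra.of ℂ Γ g • (T ^ n) (T v) := ih g (T v)
        _ = MonoidAlgebra.of ℂ Γ g • (T ^ (n+1)) v := by
            rw [pow_succ, Module.End.mul_apply]
  have hTF : ∀ v ∈ F, T v ∈ F := by
    intro v hv
    rw [hTapp]
    exact hFstable g₀ v hv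
  have hTnF : ∀ (n : ℕ), ∀ v ∈ F, (T ^ n) v ∈ F := by
    intro n
    induction n with
    | zero => intro v hv; simpa using hv
    | succ n ih =>
      intro v hv
      rw [pow_succ, Module.End.mul_apply]
      exact ih (T v) (hTF v hv)
  have haevalF : ∀ (p : ℂ[X]), ∀ v ∈ F, (aeval T p) v ∈ F := by
    intro p v hv
    rw [Polynomial.aeval_eq_sum_range]
    simp only [LinearMap.sum_apply, LinearMap.smul_apply]
    exact Submodule.sum_mem _ fun i _ => Submodule.smul_mem _ _ (hTnF i v hv)
  have haevalg : ∀ (p : ℂ[X]) (g : Γ) (v : V),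
      (aeval T p) (MonoidAlgebra.of ℂ Γ g • v)
        = MonoidAlgebra.of ℂ Γ g • (aeval T p) v := by
    intro p g v
    rw [Polynomial.aeval_eq_sum_range]
    simp only [LinearMap.sum_apply, LinearMap.smul_apply]
    rw [Finset.smul_sum]
    refine Finset.sum_congr rfl fun i _ => ?_
    rw [hTng i g v]
    exact smul_comm _ _ _
  -- eigenvalue on F
  haveI : Nontrivial F := by
    rw [Submodule.nontrivial_iff_ne_bot]
    intro h
    rw [h] at hF2
    simp [finrank_bot] at hF2
  obtain ⟨a, ha⟩ := Module.End.exists_eigenvalue (T.restrict hTF)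
  obtain ⟨v₁, hv₁⟩ := ha.exists_hasEigenvector
  have hv₁0 : (v₁ : V) ≠ 0 := fun h => hv₁.2 (Subtype.ext h)
  have hTv₁ : T (v₁ : V) = a • (v₁ : V) := by
    have h1 := hv₁.apply_eq_smul
    have h2 := congrArg (Subtype.val) h1
    simpa [LinearMap.restrict_coe_apply] using h2
  have hpowv : ∀ n : ℕ, (T ^ n) (v₁ : V) = a ^ n • (v₁ : V) := by
    intro n
    induction n with
    | zero => simp
    | succ n ih =>
      calc (T ^ (n+1)) (v₁ : V) = (T ^ n) (T (v₁ : V)) := by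
            rw [pow_succ, Module.End.mul_apply]
        _ = (T ^ n) (a • (v₁ : V)) := by rw [hTv₁]
        _ = a • (T ^ n) (v₁ : V) := map_smul _ a _
        _ = a • a ^ n • (v₁ : V) := by rw [ih]
        _ = a ^ (n+1) • (v₁ : V) := by rw [← mul_smul, ← pow_succ']
  have haN : a ^ N = 1 := by
    have h1 : (T ^ N) (v₁ : V) = (v₁ : V) := by rw [hTN]; rfl
    rw [hpowv N] at h1
    have h2 : (a ^ N - 1) • (v₁ : V) = 0 := by
      rw [sub_smul, one_smul, h1, sub_self]
    rcases smul_eq_zero.mp h2 with h | h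
    · exact sub_eq_zero.mp h
    · exact absurd h hv₁0
  have ha0 : a ≠ 0 := by
    intro h
    rw [h, zero_pow hN0] at haN
    exact zero_ne_one haN
  -- polynomial setup
  set P : Polynomial ℂ := Polynomial.X ^ N - 1 with hPdef
  set q : Polynomial ℂ := P /ₘ (Polynomial.X - Polynomial.C a) with hqdef
  have hq : (Polynomial.X - Polynomial.C a) * q = P := by
    rw [hqdef]
    exact Polynomial.mul_divByMonic_eq_iff_isRoot.mpr (by simp [hPdef, haN])
  have hqa : q.eval a = (N : ℂ) * a ^ (N - 1) := by
    have h1 := congrArg (fun p : Polynomial ℂ => (Polynomial.derivative p).eval a) hq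
    simp only [hPdef, derivative_mul, derivative_sub, derivative_X, derivative_C,
      derivative_one, derivative_X_pow, eval_add, eval_mul, eval_sub, eval_X,
      eval_C, eval_one, eval_pow, eval_natCast, sub_self, zero_mul, one_mul,
      sub_zero, add_zero, zero_add, mul_zero] at h1
    exact h1
  have hqa0 : q.eval a ≠ 0 := by
    rw [hqa]
    exact mul_ne_zero (Nat.cast_ne_zero.mpr hN0) (pow_ne_zero _ ha0)
  have hcop : IsCoprime (Polynomial.X - Polynomial.C a) q := by
    rcases (Polynomial.irreducible_X_sub_C a).isCoprime_or_dvd q with h | h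
    · exact h
    · exact absurd (Polynomial.dvd_iff_isRoot.mp h) hqa0
  obtain ⟨u, w, huw⟩ := hcop
  have hP0 : (aeval T P) = 0 := by
    rw [hPdef]
    rw [map_sub, map_pow, aeval_X, map_one, hTN, sub_self]
  have hA₁ : ∀ v : V, (aeval T (Polynomial.X - Polynomial.C a)) v = T v - a • v := by
    intro v
    simp [map_sub, aeval_X, aeval_C, Module.algebraMap_end_apply]
  set W₁ : Submodule ℂ V := F ⊓ LinearMap.ker (aeval T (Polynomial.X - Polynomial.C a))
    with hW₁def
  set W₂ : Submodule ℂ V := F ⊓ LinearMap.ker (aeval T q) with hW₂def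
  have hmW₁ : ∀ v : V, v ∈ W₁ ↔ v ∈ F ∧ T v = a • v := by
    intro v
    rw [hW₁def, Submodule.mem_inf, LinearMap.mem_ker, hA₁, sub_eq_zero]
  have hmW₂ : ∀ v : V, v ∈ W₂ ↔ v ∈ F ∧ (aeval T q) v = 0 := by
    intro v
    rw [hW₂def, Submodule.mem_inf, LinearMap.mem_ker]
  have hW₁g : ∀ (g : Γ), ∀ v ∈ W₁, MonoidAlgebra.of ℂ Γ g • v ∈ W₁ := by
    intro g v hv
    rw [hmW₁] at hv ⊢
    refine ⟨hFstable g v hv.1, ?_⟩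
    rw [hTg, hv.2]
    exact (smul_comm a (MonoidAlgebra.of ℂ Γ g) v).symm
  have hW₂g : ∀ (g : Γ), ∀ v ∈ W₂, MonoidAlgebra.of ℂ Γ g • v ∈ W₂ := by
    intro g v hv
    rw [hmW₂] at hv ⊢
    refine ⟨hFstable g v hv.1, ?_⟩
    rw [haevalg, hv.2, smul_zero]
  have hBez : ∀ v : V,
      (aeval T u) ((aeval T (Polynomial.X - Polynomial.C a)) v)
        + (aeval T w) ((aeval T q) v) = v := by
    intro v
    have h1 := congrArg (fun p : Polynomial ℂ => (aeval T p) v) huw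
    simpa [map_add, map_mul, Module.End.mul_apply, map_one, Module.End.one_apply,
      LinearMap.add_apply] using h1
  have hinf : W₁ ⊓ W₂ = ⊥ := by
    rw [Submodule.eq_bot_iff]
    intro v hv
    obtain ⟨hv1, hv2⟩ := Submodule.mem_inf.mp hv
    have h1 := (Submodule.mem_inf.mp hv1).2
    have h2 := (Submodule.mem_inf.mp hv2).2
    have h3 := hBez v
    rw [LinearMap.mem_ker.mp h1, LinearMap.mem_ker.mp h2, map_zero, map_zero,
      add_zero] at h3
    exact h3.symm
  have hsup : W₁ ⊔ W₂ = F := by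
    apply le_antisymm
    · exact sup_le inf_le_left inf_le_left
    · intro v hv
      have hx : (aeval T w) ((aeval T q) v) ∈ W₁ := by
        refine Submodule.mem_inf.mpr ⟨haevalF _ _ (haevalF _ _ hv), LinearMap.mem_ker.mpr ?_⟩
        have h1 : (aeval T (Polynomial.X - Polynomial.C a)) ((aeval T w) ((aeval T q) v))
            = (aeval T ((Polynomial.X - Polynomial.C a) * (w * q))) v := by
          simp [map_mul, Module.End.mul_apply]
        rw [h1, show (Polynomial.X - Polynomial.C a) * (w * q) = w * P by rw [← hq]; ring,
          map_mul, Module.End.mul_apply, hP0, LinearMap.zero_apply, map_zero]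
      have hy : (aeval T u) ((aeval T (Polynomial.X - Polynomial.C a)) v) ∈ W₂ := by
        refine Submodule.mem_inf.mpr ⟨haevalF _ _ (haevalF _ _ hv), LinearMap.mem_ker.mpr ?_⟩
        have h1 : (aeval T q) ((aeval T u) ((aeval T (Polynomial.X - Polynomial.C a)) v))
            = (aeval T (q * (u * (Polynomial.X - Polynomial.C a)))) v := by
          simp [map_mul, Module.End.mul_apply]
        rw [h1, show q * (u * (Polynomial.X - Polynomial.C a)) = u * P by rw [← hq]; ring,
          map_mul, Module.End.mul_apply, hP0, LinearMap.zero_apply, map_zero]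
      exact (hBez v) ▸ add_mem (Submodule.mem_sup_right hy) (Submodule.mem_sup_left hx)
  have hv₁W₁ : (v₁ : V) ∈ W₁ := (hmW₁ _).mpr ⟨v₁.2, hTv₁⟩
  have hW₁ne : W₁ ≠ ⊥ := by
    intro h
    rw [h] at hv₁W₁
    exact hv₁0 ((Submodule.mem_bot ℂ).mp hv₁W₁)
  have hW₁neF : W₁ ≠ F := by
    intro h
    obtain ⟨v, hvF, hvne⟩ := hg₀ a
    apply hvne
    have hvW₁ : v ∈ W₁ := h ▸ hvF
    have h2 := ((hmW₁ v).mp hvW₁).2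
    rw [hTapp] at h2
    exact h2
  have hfinW₁ : finrank ℂ W₁ = 1 := by
    have h1 : finrank ℂ W₁ ≠ 0 := fun h => hW₁ne (Submodule.finrank_eq_zero.mp h)
    have h2 : finrank ℂ W₁ < 2 := by
      rw [← hF2]
      exact Submodule.finrank_lt_finrank_of_lt (lt_of_le_of_ne inf_le_left hW₁neF)
    omega
  have hfinW₂ : finrank ℂ W₂ = 1 := by
    have h1 := Submodule.finrank_sup_add_finrank_inf_eq W₁ W₂
    rw [hsup, hinf, hF2, finrank_bot, hfinW₁, add_zero] at h1
    omega
  have hW₂ne : W₂ ≠ ⊥ := by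
    intro h
    rw [h] at hfinW₂
    simp [finrank_bot] at hfinW₂
  obtain ⟨v₂, hv₂W₂, hv₂0⟩ := (Submodule.ne_bot_iff W₂).mp hW₂ne
  have hspan : (ℂ ∙ v₂) = W₂ := by
    apply Submodule.eq_of_le_of_finrank_eq
    · exact (Submodule.span_singleton_le_iff_mem v₂ W₂).mpr hv₂W₂
    · rw [finrank_span_singleton hv₂0, hfinW₂]
  have hTv₂W₂ : T v₂ ∈ W₂ := by
    refine Submodule.mem_inf.mpr ⟨hTF v₂ (Submodule.mem_inf.mp hv₂W₂).1,
      LinearMap.mem_ker.mpr ?_⟩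
    have h1 : (aeval T q) (T v₂) = (aeval T (q * Polynomial.X)) v₂ := by
      simp [map_mul, Module.End.mul_apply, aeval_X]
    rw [h1, mul_comm q Polynomial.X, map_mul, Module.End.mul_apply, aeval_X,
      LinearMap.mem_ker.mp (Submodule.mem_inf.mp hv₂W₂).2, map_zero]
  obtain ⟨b, hb⟩ := Submodule.mem_span_singleton.mp (hspan ▸ hTv₂W₂)
  have hbv : ∀ v ∈ W₂, T v = b • v := by
    intro v hv
    obtain ⟨c, hc⟩ := Submodule.mem_span_singleton.mp (hspan ▸ hv)
    rw [← hc, map_smul, ← hb, smul_comm]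
  have hba : b ≠ a := by
    intro h
    have hv₂W₁ : v₂ ∈ W₁ :=
      (hmW₁ v₂).mpr ⟨(Submodule.mem_inf.mp hv₂W₂).1, by rw [hbv v₂ hv₂W₂, h]⟩
    have h2 : v₂ ∈ W₁ ⊓ W₂ := Submodule.mem_inf.mpr ⟨hv₂W₁, hv₂W₂⟩
    rw [hinf] at h2
    exact hv₂0 ((Submodule.mem_bot ℂ).mp h2)
  refine ⟨F, hmemF, hF2, hFstable, W₁, W₂, inf_le_left, inf_le_left, hW₁g, hW₂g,
    hfinW₁, hfinW₂, hinf, hsup, ?_⟩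
  rintro ⟨e, he⟩
  have hgv : MonoidAlgebra.of ℂ Γ g₀ • (v₁ : V) ∈ W₁ := hW₁g g₀ _ hv₁W₁
  have heq := he g₀ (v₁ : V) hv₁W₁ hgv
  have hsub : (⟨MonoidAlgebra.of ℂ Γ g₀ • (v₁ : V), hgv⟩ : W₁)
      = a • (⟨(v₁ : V), hv₁W₁⟩ : W₁) := by
    apply Subtype.ext
    have h1 : MonoidAlgebra.of ℂ Γ g₀ • (v₁ : V) = a • (v₁ : V) := by
      rw [← hTapp, hTv₁]
    simpa using h1
  set wv : W₂ := e ⟨(v₁ : V), hv₁W₁⟩ with hwv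
  have hw0 : (wv : V) ≠ 0 := by
    intro h
    have h1 : wv = 0 := Subtype.ext h
    have h2 : (⟨(v₁ : V), hv₁W₁⟩ : W₁) = 0 := by
      apply e.injective
      rw [← hwv, h1, map_zero]
    exact hv₁0 (congrArg Subtype.val h2)
  have hL : ((e ⟨MonoidAlgebra.of ℂ Γ g₀ • (v₁ : V), hgv⟩ : W₂) : V) = a • (wv : V) := by
    rw [hsub, map_smul, hwv]
    simp
  have hR : MonoidAlgebra.of ℂ Γ g₀ • ((wv : V)) = b • (wv : V) := by
    rw [← hTapp]
    exact hbv _ wv.2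
  have hab : a • (wv : V) = b • (wv : V) := by
    rw [← hL, heq, hR]
  have h2 : (a - b) • (wv : V) = 0 := by rw [sub_smul, hab, sub_self]
  rcases smul_eq_zero.mp h2 with h | h
  · exact hba (sub_eq_zero.mp h).symm
  · exact hw0 h
end

section
/- Let n be a positive integer, and let Γ_1 and Γ_2 be finite abelian groups of order 2n and Γ_6 a finite abelian group of order n. Let A be a complex vector space carrying commuting linear actions of Γ_1 and Γ_6 such that A is free of rank 1 as a ℂ[Γ_1]-module and free of rank 2 as a ℂ[Γ_6]-module, and let B be a complex vector space carrying commuting linear actions of Γ_6 and Γ_2 such that B is free of rank 2 as a ℂ[Γ_6]-module and free of rank 1 as a ℂ[Γ_2]-module. Consider T = A ⊗_{ℂ[Γ_6]} B, equipped with the actions of Γ_1 (through A) and Γ_2 (through B). Then there is no complex vector space M with commuting actions of Γ_1 and Γ_2 such that T is isomorphic to M ⊕ M via a ℂ-linear isomorphism commuting with both the Γ_1-action and the Γ_2-action. -/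
open TensorProduct

open Module in

lemma key_finrank_eq {G V M : Type*} [AddCommGroup V] [Module ℂ V]
    [AddCommGroup M] [Module ℂ M]
    (σ : G → V →ₗ[ℂ] V) (ρ : G → M →ₗ[ℂ] M)
    (hcomm : ∀ g h x, ρ g (ρ h x) = ρ h (ρ g x))
    (e : V ≃ₗ[ℂ] M × M)
    (v₀ : V)
    (he : ∀ g, e (σ g v₀) = (ρ g (e v₀).1, ρ g (e v₀).2))
    (hspan : Submodule.span ℂ (Set.range fun g => σ g v₀) = ⊤) :
    finrank ℂ V = finrank ℂ M := by
  set m : M := (e v₀).1 with hm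
  set m' : M := (e v₀).2 with hm'
  set f : (G →₀ ℂ) →ₗ[ℂ] V := Finsupp.linearCombination ℂ (fun g => σ g v₀) with hf
  set gM : (G →₀ ℂ) →ₗ[ℂ] M := Finsupp.linearCombination ℂ (fun g => ρ g m) with hgM
  set gM' : (G →₀ ℂ) →ₗ[ℂ] M := Finsupp.linearCombination ℂ (fun g => ρ g m') with hgM'
  have hfsurj : Function.Surjective f := by
    rw [← LinearMap.range_eq_top, hf, Finsupp.range_linearCombination, hspan]
  have hef : (e : V →ₗ[ℂ] M × M) ∘ₗ f = LinearMap.prod gM gM' := by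
    apply Finsupp.lhom_ext
    intro g
    simp [hf, hgM, hgM', he g]
  have hefc : ∀ c, e (f c) = (gM c, gM' c) := by
    intro c
    have := congrFun (congrArg (fun (h : (G →₀ ℂ) →ₗ[ℂ] M × M) => (h : (G →₀ ℂ) → M × M)) hef) c
    simpa using this
  have hgMsurj : Function.Surjective gM := by
    intro x
    obtain ⟨c, hc⟩ := hfsurj (e.symm (x, 0))
    refine ⟨c, ?_⟩
    have := hefc c
    rw [hc] at this
    simp at this
    exact this.1.symm
  obtain ⟨d, hd⟩ := hgMsurj m'
  -- the operator D = Σ d_h • ρ h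
  set D : M →ₗ[ℂ] M := Finsupp.linearCombination ℂ ρ d with hD
  have apply_lc : ∀ (c : G →₀ ℂ) (x : M),
      (Finsupp.linearCombination ℂ ρ c) x = Finsupp.linearCombination ℂ (fun g => ρ g x) c := by
    intro c x
    induction c using Finsupp.induction_linear with
    | zero => simp
    | add a b ha hb => simp [ha, hb]
    | single g r => simp
  have hDm : D m = m' := by rw [hD, apply_lc]; exact hd
  have hDcomm : ∀ g x, D (ρ g x) = ρ g (D x) := by
    intro g x
    rw [hD, apply_lc, apply_lc]
    rw [Finsupp.apply_linearCombination]
    have h2 : (fun h => ρ h ((ρ g) x)) = (⇑(ρ g) ∘ fun h => ρ h x) := by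
      funext h; exact hcomm h g x
    rw [h2]
  have hkey : gM' = D ∘ₗ gM := by
    apply Finsupp.lhom_ext
    intro g b
    simp only [hgM, hgM', LinearMap.comp_apply, Finsupp.linearCombination_single]
    rw [map_smul, ← hDm, hDcomm]
  have hker : LinearMap.ker f = LinearMap.ker gM := by
    ext c
    constructor
    · intro hc
      have := hefc c
      rw [LinearMap.mem_ker.mp hc] at this
      simp only [map_zero] at this
      exact LinearMap.mem_ker.mpr (congrArg Prod.fst this).symm
    · intro hc
      have h1 : gM c = 0 := hc
      have h2 : gM' c = 0 := by rw [hkey]; simp [h1]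
      apply LinearMap.mem_ker.mpr
      apply e.injective
      rw [hefc c, h1, h2, map_zero]
      simp
  have e1 : ((G →₀ ℂ) ⧸ LinearMap.ker f) ≃ₗ[ℂ] V := f.quotKerEquivOfSurjective hfsurj
  have e2 : ((G →₀ ℂ) ⧸ LinearMap.ker gM) ≃ₗ[ℂ] M := gM.quotKerEquivOfSurjective hgMsurj
  have e3 : ((G →₀ ℂ) ⧸ LinearMap.ker f) ≃ₗ[ℂ] ((G →₀ ℂ) ⧸ LinearMap.ker gM) :=
    Submodule.quotEquivOfEq _ _ hker
  exact (e1.symm.trans (e3.trans e2)).finrank_eq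

section

variable (Γ₁ Γ₂ Γ₆ : Type*) [CommGroup Γ₁] [CommGroup Γ₂] [CommGroup Γ₆]
variable (A : Type*) [AddCommGroup A] [Module ℂ A]
  [Module (MonoidAlgebra ℂ Γ₆) A] [Module (MonoidAlgebra ℂ Γ₁) A]
  [IsScalarTower ℂ (MonoidAlgebra ℂ Γ₆) A] [IsScalarTower ℂ (MonoidAlgebra ℂ Γ₁) A]
  [SMulCommClass (MonoidAlgebra ℂ Γ₁) (MonoidAlgebra ℂ Γ₆) A]
variable (B : Type*) [AddCommGroup B] [Module ℂ B]
  [Module (MonoidAlgebra ℂ Γ₆) B] [Module (MonoidAlgebra ℂ Γ₂) B]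
  [IsScalarTower ℂ (MonoidAlgebra ℂ Γ₆) B] [IsScalarTower ℂ (MonoidAlgebra ℂ Γ₂) B]
  [SMulCommClass (MonoidAlgebra ℂ Γ₂) (MonoidAlgebra ℂ Γ₆) B]

/-- The action of `g ∈ Γ₁` on `A`, as a `ℂ[Γ₆]`-linear map. -/
noncomputable def actA (g : Γ₁) : A →ₗ[MonoidAlgebra ℂ Γ₆] A where
  toFun a := MonoidAlgebra.of ℂ Γ₁ g • a
  map_add' := smul_add _
  map_smul' r a := smul_comm (MonoidAlgebra.of ℂ Γ₁ g) r a

/-- The action of `g ∈ Γ₂` on `B`, as a `ℂ[Γ₆]`-linear map. -/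
noncomputable def actB (g : Γ₂) : B →ₗ[MonoidAlgebra ℂ Γ₆] B where
  toFun b := MonoidAlgebra.of ℂ Γ₂ g • b
  map_add' := smul_add _
  map_smul' r b := smul_comm (MonoidAlgebra.of ℂ Γ₂ g) r b

/-- A cyclic-vector fact: in a group algebra `ℂ[Γ]`, the `ℂ`-span of the group elements
acting on the canonical generator is everything. -/
lemma span_smul_gen {Γ : Type*} [CommGroup Γ] {A : Type*} [AddCommGroup A] [Module ℂ A]
    [Module (MonoidAlgebra ℂ Γ) A] [IsScalarTower ℂ (MonoidAlgebra ℂ Γ) A]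
    (eq : A ≃ₗ[MonoidAlgebra ℂ Γ] MonoidAlgebra ℂ Γ) :
    Submodule.span ℂ (Set.range fun g : Γ => MonoidAlgebra.of ℂ Γ g • eq.symm 1) = ⊤ := by
  have hOf : Submodule.span ℂ (Set.range fun g : Γ => MonoidAlgebra.of ℂ Γ g) = ⊤ := by
    have := (MonoidAlgebra.basis Γ ℂ).span_eq
    have hb : (fun g : Γ => MonoidAlgebra.of ℂ Γ g) = ⇑(MonoidAlgebra.basis Γ ℂ) :=
      funext fun g => by rw [MonoidAlgebra.basis_apply, MonoidAlgebra.of_apply]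
    rw [hb]
    exact this
  have hfun : (fun g : Γ => MonoidAlgebra.of ℂ Γ g • eq.symm 1)
      = ((eq.restrictScalars ℂ).symm ∘ fun g : Γ => MonoidAlgebra.of ℂ Γ g) := by
    funext g
    show MonoidAlgebra.of ℂ Γ g • eq.symm 1 = eq.symm (MonoidAlgebra.of ℂ Γ g)
    apply eq.injective
    rw [map_smul, eq.apply_symm_apply, eq.apply_symm_apply, smul_eq_mul, mul_one]
  rw [hfun, Set.range_comp, ← LinearEquiv.coe_toLinearMap, Submodule.span_image, hOf, Submodule.map_top]
  exact LinearEquiv.range _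

/-- The counterexample computation: with `|Γ₁| = |Γ₂| = 2n`, `|Γ₆| = n`, `A` a
`(ℂ[Γ₁], ℂ[Γ₆])`-bimodule free of rank 1 over `ℂ[Γ₁]` and of rank 2 over `ℂ[Γ₆]`, and `B`
a `(ℂ[Γ₆], ℂ[Γ₂])`-bimodule free of rank 2 over `ℂ[Γ₆]` and of rank 1 over `ℂ[Γ₂]`, the
tensor product `T = A ⊗_{ℂ[Γ₆]} B` with its `Γ₁`- and `Γ₂`-actions is not equivariantly
isomorphic to `M ⊕ M` for any complex vector space `M` with commuting `Γ₁`- and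
`Γ₂`-actions. -/
theorem tensor_not_doubled
    [Fintype Γ₁] [Fintype Γ₂] [Fintype Γ₆] (n : ℕ) (hn : 0 < n)
    (h₁ : Fintype.card Γ₁ = 2 * n) (h₂ : Fintype.card Γ₂ = 2 * n)
    (h₆ : Fintype.card Γ₆ = n)
    (hA₁ : Nonempty (A ≃ₗ[MonoidAlgebra ℂ Γ₁] MonoidAlgebra ℂ Γ₁))
    (hA₆ : Nonempty (A ≃ₗ[MonoidAlgebra ℂ Γ₆] (Fin 2 → MonoidAlgebra ℂ Γ₆)))
    (hB₂ : Nonempty (B ≃ₗ[MonoidAlgebra ℂ Γ₂] MonoidAlgebra ℂ Γ₂))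
    (hB₆ : Nonempty (B ≃ₗ[MonoidAlgebra ℂ Γ₆] (Fin 2 → MonoidAlgebra ℂ Γ₆))) :
    ∀ (M : Type*) [AddCommGroup M] [Module ℂ M],
      ∀ (ρ₁ : Γ₁ →* (M ≃ₗ[ℂ] M)) (ρ₂ : Γ₂ →* (M ≃ₗ[ℂ] M)),
        (∀ (g₁ : Γ₁) (g₂ : Γ₂) (m : M), ρ₁ g₁ (ρ₂ g₂ m) = ρ₂ g₂ (ρ₁ g₁ m)) →
        ∀ e : (A ⊗[MonoidAlgebra ℂ Γ₆] B) ≃ₗ[ℂ] M × M,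
          ¬ ((∀ (g : Γ₁) (t : A ⊗[MonoidAlgebra ℂ Γ₆] B),
                e (LinearMap.rTensor B (actA Γ₁ Γ₆ A g) t)
                  = (ρ₁ g (e t).1, ρ₁ g (e t).2)) ∧
             (∀ (g : Γ₂) (t : A ⊗[MonoidAlgebra ℂ Γ₆] B),
                e (LinearMap.lTensor A (actB Γ₂ Γ₆ B g) t)
                  = (ρ₂ g (e t).1, ρ₂ g (e t).2))) := by
  intro M _ _ ρ₁ ρ₂ hcommM e
  rintro ⟨hEq1, hEq2⟩
  classical
  obtain ⟨eqA⟩ := hA₁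
  obtain ⟨eqA6⟩ := hA₆
  obtain ⟨eqB⟩ := hB₂
  set S := MonoidAlgebra ℂ Γ₆ with hS
  -- the actions, packaged as families of `ℂ`-linear maps indexed by `Γ₁ × Γ₂`
  set σ : Γ₁ × Γ₂ → (A ⊗[S] B) →ₗ[ℂ] (A ⊗[S] B) := fun g =>
    ((LinearMap.rTensor B (actA Γ₁ Γ₆ A g.1)).comp
      (LinearMap.lTensor A (actB Γ₂ Γ₆ B g.2))).restrictScalars ℂ with hσ
  set ρ : Γ₁ × Γ₂ → M →ₗ[ℂ] M := fun g =>
    ((ρ₁ g.1 : M →ₗ[ℂ] M)).comp ((ρ₂ g.2 : M →ₗ[ℂ] M)) with hρ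
  have mulApply : ∀ (f g : M ≃ₗ[ℂ] M) (x : M), (f * g) x = f (g x) := fun _ _ _ => rfl
  have comm1 : ∀ (a b : Γ₁) (y : M), ρ₁ a (ρ₁ b y) = ρ₁ b (ρ₁ a y) := by
    intro a b y
    have h : ρ₁ (a * b) = ρ₁ (b * a) := by rw [mul_comm]
    have := congrArg (fun (u : M ≃ₗ[ℂ] M) => u y) h
    simpa only [map_mul, mulApply] using this
  have comm2 : ∀ (a b : Γ₂) (y : M), ρ₂ a (ρ₂ b y) = ρ₂ b (ρ₂ a y) := by
    intro a b y
    have h : ρ₂ (a * b) = ρ₂ (b * a) := by rw [mul_comm]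
    have := congrArg (fun (u : M ≃ₗ[ℂ] M) => u y) h
    simpa only [map_mul, mulApply] using this
  have hcommρ : ∀ g h : Γ₁ × Γ₂, ∀ x : M, ρ g (ρ h x) = ρ h (ρ g x) := by
    intro g h x
    show ρ₁ g.1 (ρ₂ g.2 (ρ₁ h.1 (ρ₂ h.2 x))) = ρ₁ h.1 (ρ₂ h.2 (ρ₁ g.1 (ρ₂ g.2 x)))
    rw [← hcommM h.1 g.2 (ρ₂ h.2 x), comm1 g.1 h.1, ← hcommM g.1 h.2 (ρ₂ g.2 x),
      comm2 h.2 g.2]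
  -- the cyclic vector
  set a₀ : A := eqA.symm 1 with ha₀
  set b₀ : B := eqB.symm 1 with hb₀
  set v₀ : A ⊗[S] B := a₀ ⊗ₜ[S] b₀ with hv₀
  have hσv : ∀ g : Γ₁ × Γ₂,
      σ g v₀ = (MonoidAlgebra.of ℂ Γ₁ g.1 • a₀) ⊗ₜ[S] (MonoidAlgebra.of ℂ Γ₂ g.2 • b₀) := by
    intro g
    show LinearMap.rTensor B (actA Γ₁ Γ₆ A g.1)
        (LinearMap.lTensor A (actB Γ₂ Γ₆ B g.2) (a₀ ⊗ₜ[S] b₀)) = _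
    rw [LinearMap.lTensor_tmul, LinearMap.rTensor_tmul]
    rfl
  have he : ∀ g : Γ₁ × Γ₂, e (σ g v₀) = (ρ g (e v₀).1, ρ g (e v₀).2) := by
    intro g
    show e (LinearMap.rTensor B (actA Γ₁ Γ₆ A g.1)
        (LinearMap.lTensor A (actB Γ₂ Γ₆ B g.2) v₀)) = _
    rw [hEq1, hEq2]
    rfl
  have hspan : Submodule.span ℂ (Set.range fun g : Γ₁ × Γ₂ => σ g v₀) = ⊤ := by
    rw [eq_top_iff]
    rintro t -
    induction t using TensorProduct.induction_on with
    | zero => exact zero_mem _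
    | add x y hx hy => exact add_mem hx hy
    | tmul a b =>
      have ha : a ∈ Submodule.span ℂ
          (Set.range fun g : Γ₁ => MonoidAlgebra.of ℂ Γ₁ g • a₀) := by
        rw [span_smul_gen eqA]; trivial
      induction ha using Submodule.span_induction with
      | mem x hx =>
        obtain ⟨g₁, rfl⟩ := hx
        have hb : b ∈ Submodule.span ℂ
            (Set.range fun g : Γ₂ => MonoidAlgebra.of ℂ Γ₂ g • b₀) := by
          rw [span_smul_gen eqB]; trivial
        induction hb using Submodule.span_induction with
        | mem y hy =>
          obtain ⟨g₂, rfl⟩ := hy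
          exact Submodule.subset_span ⟨(g₁, g₂), hσv (g₁, g₂)⟩
        | zero => rw [tmul_zero]; exact zero_mem _
        | add u v hu hv hpu hpv => rw [tmul_add]; exact add_mem hpu hpv
        | smul c y hy hpy => rw [tmul_smul]; exact Submodule.smul_mem _ c hpy
      | zero => rw [zero_tmul]; exact zero_mem _
      | add u v hu hv hpu hpv => rw [add_tmul]; exact add_mem hpu hpv
      | smul c x hx hpx =>
        rw [← TensorProduct.smul_tmul']
        exact Submodule.smul_mem _ c hpx
  -- dimension bookkeeping
  have hkey : Module.finrank ℂ (A ⊗[S] B) = Module.finrank ℂ M :=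
    key_finrank_eq σ ρ hcommρ e v₀ he hspan
  have eT : (A ⊗[S] B) ≃ₗ[ℂ] B × B :=
    ((TensorProduct.congr eqA6 (LinearEquiv.refl S B)).trans
      ((TensorProduct.congr (LinearEquiv.finTwoArrow S S) (LinearEquiv.refl S B)).trans
        ((TensorProduct.prodLeft S S S S B).trans
          ((TensorProduct.lid S B).prodCongr (TensorProduct.lid S B))))).restrictScalars ℂ
  have fRB : FiniteDimensional ℂ (MonoidAlgebra ℂ Γ₂) :=
    Module.Finite.of_basis (MonoidAlgebra.basis Γ₂ ℂ)
  have fB : FiniteDimensional ℂ B := (eqB.restrictScalars ℂ).symm.finiteDimensional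
  have fM : FiniteDimensional ℂ M := by
    have fT : FiniteDimensional ℂ (A ⊗[S] B) := eT.symm.finiteDimensional
    have fMM : FiniteDimensional ℂ (M × M) := e.finiteDimensional
    exact Module.Finite.of_surjective (LinearMap.fst ℂ M M) (fun m => ⟨(m, 0), rfl⟩)
  have bB : Module.Basis Γ₂ ℂ (MonoidAlgebra ℂ Γ₂) := MonoidAlgebra.basis Γ₂ ℂ
  have hrB : Module.finrank ℂ B = Fintype.card Γ₂ :=
    (eqB.restrictScalars ℂ).finrank_eq.trans (Module.finrank_eq_card_basis bB)
  have hTB : Module.finrank ℂ (A ⊗[S] B) = Module.finrank ℂ B + Module.finrank ℂ B := by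
    rw [eT.finrank_eq, Module.finrank_prod]
  have hTM : Module.finrank ℂ (A ⊗[S] B) = Module.finrank ℂ M + Module.finrank ℂ M := by
    rw [e.finrank_eq, Module.finrank_prod]
  rw [h₂] at hrB
  omega

end
end
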